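/- Let γ ∈ ℝ, let V : ℝ → ℝ be continuously differentiable, and let ψ : [0,1] → ℝ be twice continuously differentiable. Then ∫_0^1 ( ψ''(s) + γ ψ'(s) + V'(ψ(s)) )² ds = ∫_0^1 ( ψ''(s) + V'(ψ(s)) )² + γ² ψ'(s)² ds + γ ( ψ'(1)² − ψ'(0)² + 2 V(ψ(1)) − 2 V(ψ(0)) ). In particular, if ψ'(0) = ψ'(1) = 0 and V(ψ(0)) = V(ψ(1)), then ∫_0^1 ( ψ'' + γ ψ' + V'(ψ) )² ds = ∫_0^1 ( ψ'' + V'(ψ) )² + γ² (ψ')² ds. -/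

import Mathlib

open MeasureTheory intervalIntegral

/-- Energy identity for the Onsager–Machlup density of the damped
Duffing-type equation: the cross term coming from the damping `γ` reduces to
a boundary term, and vanishes when `ψ'(0) = ψ'(1) = 0` and
`V(ψ(0)) = V(ψ(1))`. -/
theorem duffing_energy_identity
    (γ : ℝ) (V ψ : ℝ → ℝ) (hV : ContDiff ℝ 1 V) (hψ : ContDiff ℝ 2 ψ) :
    (∫ s in (0:ℝ)..1,
        (deriv (deriv ψ) s + γ * deriv ψ s + deriv V (ψ s)) ^ 2)
      = (∫ s in (0:ℝ)..1,
          ((deriv (deriv ψ) s + deriv V (ψ s)) ^ 2 + γ ^ 2 * (deriv ψ s) ^ 2))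
        + γ * ((deriv ψ 1) ^ 2 - (deriv ψ 0) ^ 2 + 2 * V (ψ 1) - 2 * V (ψ 0)) ∧
    (deriv ψ 0 = 0 → deriv ψ 1 = 0 → V (ψ 0) = V (ψ 1) →
      (∫ s in (0:ℝ)..1,
          (deriv (deriv ψ) s + γ * deriv ψ s + deriv V (ψ s)) ^ 2)
        = ∫ s in (0:ℝ)..1,
            ((deriv (deriv ψ) s + deriv V (ψ s)) ^ 2
              + γ ^ 2 * (deriv ψ s) ^ 2)) := by
  have hψ' : ContDiff ℝ 1 (deriv ψ) := by
    exact ((contDiff_succ_iff_deriv (n := 1)).mp (by exact_mod_cast hψ)).2.2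
  have hcψ' : Continuous (deriv ψ) := hψ'.continuous
  have hcψ'' : Continuous (deriv (deriv ψ)) := hψ'.continuous_deriv le_rfl
  have hcV' : Continuous (deriv V) := hV.continuous_deriv le_rfl
  have hcψ : Continuous ψ := hψ.continuous
  -- continuity of all integrands
  have hA : Continuous fun s => deriv (deriv ψ) s + deriv V (ψ s) :=
    hcψ''.add (hcV'.comp hcψ)
  have hcross : Continuous fun s =>
      2 * deriv ψ s * (deriv (deriv ψ) s + deriv V (ψ s)) :=
    ((continuous_const.mul hcψ').mul hA)
  -- FTC for the cross term
  have hFTC : (∫ s in (0:ℝ)..1,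
      2 * deriv ψ s * (deriv (deriv ψ) s + deriv V (ψ s)))
      = ((deriv ψ 1) ^ 2 + 2 * V (ψ 1)) - ((deriv ψ 0) ^ 2 + 2 * V (ψ 0)) := by
    apply intervalIntegral.integral_eq_sub_of_hasDerivAt (f := fun t => (deriv ψ t) ^ 2 + 2 * V (ψ t))
    · intro s _
      have h1 : HasDerivAt (deriv ψ) (deriv (deriv ψ) s) s :=
        ((hψ'.differentiable one_ne_zero) s).hasDerivAt
      have h0 : HasDerivAt ψ (deriv ψ s) s :=
        ((hψ.differentiable two_ne_zero) s).hasDerivAt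
      have hVd : HasDerivAt V (deriv V (ψ s)) (ψ s) :=
        ((hV.differentiable one_ne_zero) (ψ s)).hasDerivAt
      have h2 : HasDerivAt (fun t => (deriv ψ t) ^ 2)
          (2 * deriv ψ s ^ 1 * deriv (deriv ψ) s) s := h1.pow 2
      have h3 : HasDerivAt (fun t => V (ψ t)) (deriv V (ψ s) * deriv ψ s) s :=
        hVd.comp s h0
      have h4 := h2.add (h3.const_mul 2)
      convert h4 using 1
      · rfl
      · ring
    · exact hcross.intervalIntegrable 0 1
  have key : (∫ s in (0:ℝ)..1,
        (deriv (deriv ψ) s + γ * deriv ψ s + deriv V (ψ s)) ^ 2)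
      = (∫ s in (0:ℝ)..1,
          ((deriv (deriv ψ) s + deriv V (ψ s)) ^ 2 + γ ^ 2 * (deriv ψ s) ^ 2))
        + γ * ((deriv ψ 1) ^ 2 - (deriv ψ 0) ^ 2 + 2 * V (ψ 1) - 2 * V (ψ 0)) := by
    have hsplit : (∫ s in (0:ℝ)..1,
        (deriv (deriv ψ) s + γ * deriv ψ s + deriv V (ψ s)) ^ 2)
        = ∫ s in (0:ℝ)..1,
            (((deriv (deriv ψ) s + deriv V (ψ s)) ^ 2 + γ ^ 2 * (deriv ψ s) ^ 2)
              + γ * (2 * deriv ψ s * (deriv (deriv ψ) s + deriv V (ψ s)))) := by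
      apply intervalIntegral.integral_congr
      intro s _
      ring
    rw [hsplit, intervalIntegral.integral_add, intervalIntegral.integral_const_mul,
      hFTC]
    · ring
    · exact ((hA.pow 2).add ((continuous_const.mul (hcψ'.pow 2)))).intervalIntegrable 0 1
    · exact (continuous_const.mul hcross).intervalIntegrable 0 1
  refine ⟨key, fun h0 h1 hv => ?_⟩
  rw [key, h0, h1, hv]
  ring
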